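/- arXiv:2101.05394 — 3 statements merged into one kernel-verified Lean document; each statement's English description precedes it below -/
import Mathlib

section
/- Let d be a positive integer and let τ, α, ν > 0. Define F_{τ,α,ν}(θ) = (1/B(α,ν)) ∫₀¹ ((1-δ)/(1-δ cos θ))^τ δ^{α-1} (1-δ)^{ν-1} dδ for θ ∈ [0,π]. Then the kernel K(x,y) = F_{τ,α,ν}(arccos⟨x,y⟩) is positive semidefinite on the unit sphere of ℝ^{d+1}: for every positive integer m, every points x_1,…,x_m on the unit sphere of ℝ^{d+1} and every reals c_1,…,c_m, one has Σ_{i=1}^m Σ_{j=1}^m c_i c_j F_{τ,α,ν}(arccos⟨x_i,x_j⟩) ≥ 0. -/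
open Real MeasureTheory

/-- Euler Beta function `B(a,b) = Γ(a)Γ(b)/Γ(a+b)`. -/
noncomputable def betaFn (a b : ℝ) : ℝ := Real.Gamma a * Real.Gamma b / Real.Gamma (a + b)

/-- The `F`-family correlation function
`F_{τ,α,ν}(θ) = (1/B(α,ν)) ∫₀¹ ((1-δ)/(1-δ cos θ))^τ δ^{α-1} (1-δ)^{ν-1} dδ`. -/
noncomputable def Ffam (τ α ν θ : ℝ) : ℝ :=
  (1 / betaFn α ν) * ∫ δ in Set.Ioo (0:ℝ) 1,
    ((1 - δ) / (1 - δ * Real.cos θ)) ^ τ * δ ^ (α - 1) * (1 - δ) ^ (ν - 1)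

lemma pow_psd {d m : ℕ} (x : Fin m → EuclideanSpace ℝ (Fin (d + 1))) (c : Fin m → ℝ) (n : ℕ) :
    0 ≤ ∑ i, ∑ j, c i * c j * (inner ℝ (x i) (x j) : ℝ) ^ n := by
  have hin : ∀ i j, (inner ℝ (x i) (x j) : ℝ) = ∑ k, x i k * x j k := by
    intro i j
    simp [PiLp.inner_apply, RCLike.inner_apply, mul_comm]
  have hexp : ∀ i j : Fin m, (inner ℝ (x i) (x j) : ℝ) ^ n
      = ∑ g : Fin n → Fin (d+1), (∏ t, x i (g t)) * (∏ t, x j (g t)) := by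
    intro i j
    rw [hin]
    have h1 : (∑ k, x i k * x j k) ^ n = ∏ _t : Fin n, (∑ k, x i k * x j k) := by
      simp [Finset.prod_const]
    rw [h1, Finset.prod_univ_sum]
    simp [Fintype.piFinset_univ, Finset.prod_mul_distrib]
  calc 0 ≤ ∑ g : Fin n → Fin (d+1), (∑ i, c i * ∏ t, x i (g t)) ^ 2 := by positivity
    _ = ∑ i, ∑ j, c i * c j * (inner ℝ (x i) (x j) : ℝ) ^ n := by
        simp_rw [hexp, Finset.mul_sum, sq, Finset.sum_mul_sum]
        rw [Finset.sum_comm]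
        refine Finset.sum_congr rfl fun i _ => ?_
        rw [Finset.sum_comm]
        exact Finset.sum_congr rfl fun j _ => Finset.sum_congr rfl fun g _ => by ring

set_option maxHeartbeats 2000000 in
lemma exp_psd {d m : ℕ} (x : Fin m → EuclideanSpace ℝ (Fin (d + 1))) (c : Fin m → ℝ)
    {t : ℝ} (ht : 0 ≤ t) :
    0 ≤ ∑ i, ∑ j, c i * c j * Real.exp (t * (inner ℝ (x i) (x j) : ℝ)) := by
  have hexp : ∀ i j : Fin m, c i * c j * Real.exp (t * (inner ℝ (x i) (x j) : ℝ))
      = ∑' n : ℕ, c i * c j * (t ^ n / n.factorial) * (inner ℝ (x i) (x j) : ℝ) ^ n := by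
    intro i j
    rw [Real.exp_eq_exp_ℝ, NormedSpace.exp_eq_tsum_div, ← tsum_mul_left]
    exact tsum_congr fun n => by rw [mul_pow]; ring
  have hsum : ∀ i j : Fin m, Summable (fun n : ℕ =>
      c i * c j * (t ^ n / n.factorial) * (inner ℝ (x i) (x j) : ℝ) ^ n) := by
    intro i j
    have := (Real.summable_pow_div_factorial (t * inner ℝ (x i) (x j))).mul_left (c i * c j)
    refine this.congr fun n => by rw [mul_pow]; ring
  rw [← Finset.sum_product']
  simp_rw [hexp]
  rw [← Summable.tsum_finsetSum (fun p _ => hsum p.1 p.2)]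
  refine tsum_nonneg fun n => ?_
  have h1 : (0:ℝ) ≤ t ^ n / n.factorial := by positivity
  calc (0:ℝ) ≤ (t ^ n / n.factorial) * ∑ i, ∑ j, c i * c j * (inner ℝ (x i) (x j) : ℝ) ^ n :=
        mul_nonneg h1 (pow_psd x c n)
    _ = ∑ p ∈ Finset.univ ×ˢ Finset.univ,
          c p.1 * c p.2 * (t ^ n / n.factorial) * (inner ℝ (x p.1) (x p.2) : ℝ) ^ n := by
        rw [← Finset.sum_product', Finset.mul_sum]
        exact Finset.sum_congr rfl fun p _ => by ring

lemma gammaKernel_integrable {τ r : ℝ} (hτ : 0 < τ) (hr : 0 < r) :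
    IntegrableOn (fun t : ℝ => t ^ (τ - 1) * Real.exp (-(r * t))) (Set.Ioi 0) := by
  have h0 : IntegrableOn (fun u : ℝ => u ^ (τ - 1) * Real.exp (-u)) (Set.Ioi (0:ℝ)) :=
    (Real.GammaIntegral_convergent hτ).congr_fun (fun u _ => mul_comm _ _) measurableSet_Ioi
  have h1 : IntegrableOn (fun t : ℝ => (r * t) ^ (τ - 1) * Real.exp (-(r * t)))
      (Set.Ioi (0:ℝ)) := by
    have := (integrableOn_Ioi_comp_mul_left_iff
      (fun u : ℝ => u ^ (τ - 1) * Real.exp (-u)) 0 hr).mpr (by simpa using h0)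
    simpa using this
  have h2 : IntegrableOn (fun t : ℝ => r ^ (1 - τ) * ((r * t) ^ (τ - 1) * Real.exp (-(r * t))))
      (Set.Ioi (0:ℝ)) := h1.const_mul _
  refine h2.congr_fun (fun t ht => ?_) measurableSet_Ioi
  have ht' : (0:ℝ) < t := ht
  dsimp only
  rw [Real.mul_rpow hr.le ht'.le, ← mul_assoc, ← mul_assoc, ← Real.rpow_add hr]
  norm_num

set_option maxHeartbeats 2000000 in
lemma inv_psd {d m : ℕ} (x : Fin m → EuclideanSpace ℝ (Fin (d + 1))) (hx : ∀ i, ‖x i‖ = 1)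
    (c : Fin m → ℝ) {τ : ℝ} (hτ : 0 < τ) {δ : ℝ} (hδ0 : 0 ≤ δ) (hδ1 : δ < 1) :
    0 ≤ ∑ i, ∑ j, c i * c j * (1 / (1 - δ * (inner ℝ (x i) (x j) : ℝ))) ^ τ := by
  have hs : ∀ i j, |(inner ℝ (x i) (x j) : ℝ)| ≤ 1 := fun i j => by
    simpa [hx] using abs_real_inner_le_norm (x i) (x j)
  have hr : ∀ i j, 0 < 1 - δ * (inner ℝ (x i) (x j) : ℝ) := by
    intro i j
    have h := (abs_le.mp (hs i j)).2
    nlinarith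
  have hΓ : (0:ℝ) < Real.Gamma τ := Real.Gamma_pos_of_pos hτ
  have key : ∀ i j : Fin m, c i * c j * (1 / (1 - δ * (inner ℝ (x i) (x j) : ℝ))) ^ τ
      = (Real.Gamma τ)⁻¹ * ∫ t in Set.Ioi (0:ℝ),
          c i * c j * (t ^ (τ - 1) * Real.exp (-((1 - δ * (inner ℝ (x i) (x j) : ℝ)) * t))) := by
    intro i j
    rw [MeasureTheory.integral_const_mul,
      Real.integral_rpow_mul_exp_neg_mul_Ioi hτ (hr i j)]
    field_simp
  simp_rw [key, ← Finset.mul_sum]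
  refine mul_nonneg (inv_nonneg.mpr hΓ.le) ?_
  rw [← Finset.sum_product']
  have hint : ∀ p : Fin m × Fin m, Integrable (fun t : ℝ =>
      c p.1 * c p.2 * (t ^ (τ - 1) *
        Real.exp (-((1 - δ * (inner ℝ (x p.1) (x p.2) : ℝ)) * t))))
      (volume.restrict (Set.Ioi 0)) :=
    fun p => (gammaKernel_integrable hτ (hr p.1 p.2)).const_mul _
  rw [← MeasureTheory.integral_finset_sum _ (fun p _ => hint p)]
  refine setIntegral_nonneg measurableSet_Ioi fun t ht => ?_
  have ht' : (0:ℝ) < t := ht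
  calc (0:ℝ) ≤ (t ^ (τ - 1) * Real.exp (-t)) *
        ∑ i, ∑ j, c i * c j * Real.exp ((δ * t) * (inner ℝ (x i) (x j) : ℝ)) :=
      mul_nonneg (by positivity) (exp_psd x c (mul_nonneg hδ0 ht'.le))
    _ = ∑ p ∈ Finset.univ ×ˢ Finset.univ, c p.1 * c p.2 * (t ^ (τ - 1) *
          Real.exp (-((1 - δ * (inner ℝ (x p.1) (x p.2) : ℝ)) * t))) := by
        rw [← Finset.sum_product', Finset.mul_sum]
        refine Finset.sum_congr rfl fun p _ => ?_
        rw [show -((1 - δ * (inner ℝ (x p.1) (x p.2) : ℝ)) * t)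
            = (δ * t) * (inner ℝ (x p.1) (x p.2) : ℝ) + -t by ring, Real.exp_add]
        ring

lemma betaKernel_integrable {α ν : ℝ} (hα : 0 < α) (hν : 0 < ν) :
    IntegrableOn (fun δ : ℝ => δ ^ (α - 1) * (1 - δ) ^ (ν - 1)) (Set.Ioo (0:ℝ) 1) := by
  have p1 : IntervalIntegrable (fun δ : ℝ => δ ^ (α - 1) * (1 - δ) ^ (ν - 1))
      volume 0 (1/2) := by
    refine (intervalIntegral.intervalIntegrable_rpow' (by linarith)).mul_continuousOn ?_
    refine (continuousOn_const.sub continuousOn_id).rpow_const fun δ hδ => Or.inl ?_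
    rw [Set.uIcc_of_le (by norm_num)] at hδ
    have := hδ.2
    intro h; rw [Pi.sub_apply, sub_eq_zero] at h; simp only [id_eq] at h; linarith
  have p2 : IntervalIntegrable (fun δ : ℝ => δ ^ (α - 1) * (1 - δ) ^ (ν - 1))
      volume (1/2) 1 := by
    have h1 : IntervalIntegrable (fun δ : ℝ => (1 - δ) ^ (ν - 1)) volume (1/2) 1 := by
      have := (intervalIntegral.intervalIntegrable_rpow' (r := ν - 1) (a := 0) (b := 1/2)
        (by linarith)).comp_sub_left 1
      norm_num at this
      exact this.symm
    refine h1.continuousOn_mul (g := fun δ : ℝ => δ ^ (α - 1)) ?_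
    refine (continuousOn_id).rpow_const fun δ hδ => Or.inl ?_
    rw [Set.uIcc_of_le (by norm_num)] at hδ
    have := hδ.1
    intro h; simp only [id_eq] at h; linarith
  have q1 : IntegrableOn (fun δ : ℝ => δ ^ (α - 1) * (1 - δ) ^ (ν - 1))
      (Set.Ioc (0:ℝ) (1/2)) :=
    (intervalIntegrable_iff_integrableOn_Ioc_of_le (by norm_num)).mp p1
  have q2 : IntegrableOn (fun δ : ℝ => δ ^ (α - 1) * (1 - δ) ^ (ν - 1))
      (Set.Ioc (1/2 : ℝ) 1) :=
    (intervalIntegrable_iff_integrableOn_Ioc_of_le (by norm_num)).mp p2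
  refine (q1.union q2).mono_set fun t ht => ?_
  rcases le_or_gt t (1/2) with h | h
  · exact Or.inl ⟨ht.1, h⟩
  · exact Or.inr ⟨h, ht.2.le⟩

set_option maxHeartbeats 2000000 in
/-- The kernel `(x,y) ↦ F_{τ,α,ν}(arccos⟨x,y⟩)` is positive semidefinite on the
unit sphere of `ℝ^{d+1}`. -/
theorem Ffam_posSemidef (d : ℕ) (hd : 0 < d) (τ α ν : ℝ)
    (hτ : 0 < τ) (hα : 0 < α) (hν : 0 < ν)
    (m : ℕ) (hm : 0 < m) (x : Fin m → EuclideanSpace ℝ (Fin (d + 1)))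
    (hx : ∀ i, ‖x i‖ = 1) (c : Fin m → ℝ) :
    0 ≤ ∑ i, ∑ j, c i * c j * Ffam τ α ν (Real.arccos (inner ℝ (x i) (x j))) := by
  have hs : ∀ i j, |(inner ℝ (x i) (x j) : ℝ)| ≤ 1 := fun i j => by
    simpa [hx] using abs_real_inner_le_norm (x i) (x j)
  set G : ℝ → ℝ → ℝ := fun s δ =>
    ((1 - δ) / (1 - δ * s)) ^ τ * δ ^ (α - 1) * (1 - δ) ^ (ν - 1) with hG
  have key : ∀ i j : Fin m, Ffam τ α ν (Real.arccos (inner ℝ (x i) (x j)))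
      = (1 / betaFn α ν) * ∫ δ in Set.Ioo (0:ℝ) 1, G (inner ℝ (x i) (x j)) δ := by
    intro i j
    unfold Ffam
    rw [Real.cos_arccos (abs_le.mp (hs i j)).1 (abs_le.mp (hs i j)).2]
  -- positivity of 1/B
  have hB : 0 ≤ 1 / betaFn α ν := by
    have h1 := Real.Gamma_pos_of_pos hα
    have h2 := Real.Gamma_pos_of_pos hν
    have h3 := Real.Gamma_pos_of_pos (by linarith : 0 < α + ν)
    unfold betaFn
    positivity
  -- properties of r := 1 - δ * s for δ ∈ Ioo 0 1, |s| ≤ 1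
  have hr : ∀ (s δ : ℝ), |s| ≤ 1 → δ ∈ Set.Ioo (0:ℝ) 1 → 0 < 1 - δ * s := by
    intro s δ h1 h2
    have := (abs_le.mp h1).2
    obtain ⟨hδ0, hδ1⟩ := h2
    nlinarith
  -- integrability of each G s ·
  have hInt : ∀ (s : ℝ), |s| ≤ 1 → IntegrableOn (fun δ => G s δ) (Set.Ioo (0:ℝ) 1) := by
    intro s h1
    have hmeas : AEStronglyMeasurable (fun δ => G s δ)
        (volume.restrict (Set.Ioo (0:ℝ) 1)) := by
      refine ContinuousOn.aestronglyMeasurable ?_ measurableSet_Ioo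
      have c1 : ContinuousOn (fun δ : ℝ => (1 - δ) / (1 - δ * s)) (Set.Ioo (0:ℝ) 1) := by
        refine (continuousOn_const.sub continuousOn_id).div
          (continuousOn_const.sub (continuousOn_id.mul continuousOn_const)) ?_
        intro δ hδ
        exact (hr s δ h1 hδ).ne'
      refine ((c1.rpow_const ?_).mul (continuousOn_id.rpow_const ?_)).mul
        ((continuousOn_const.sub continuousOn_id).rpow_const ?_)
      · exact fun δ hδ => Or.inr hτ.le
      · exact fun δ hδ => Or.inl (by simpa using hδ.1.ne')
      · intro δ hδ
        refine Or.inl fun h => ?_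
        rw [Pi.sub_apply, sub_eq_zero] at h
        simp only [id_eq] at h
        exact absurd h.symm hδ.2.ne
    refine (betaKernel_integrable hα hν).mono' hmeas ?_
    rw [ae_restrict_iff' measurableSet_Ioo]
    refine Filter.Eventually.of_forall fun δ hδ => ?_
    have hrp := hr s δ h1 hδ
    obtain ⟨hδ0, hδ1⟩ := hδ
    have hratio0 : 0 ≤ (1 - δ) / (1 - δ * s) := div_nonneg (by linarith) hrp.le
    have hratio1 : (1 - δ) / (1 - δ * s) ≤ 1 := by
      rw [div_le_one hrp]
      have h2s := (abs_le.mp h1).2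
      nlinarith
    have hGnn : 0 ≤ G s δ := by
      refine mul_nonneg (mul_nonneg (Real.rpow_nonneg hratio0 τ) ?_) ?_
      · exact Real.rpow_nonneg hδ0.le _
      · exact Real.rpow_nonneg (by linarith) _
    rw [Real.norm_eq_abs, abs_of_nonneg hGnn]
    have h2 : ((1 - δ) / (1 - δ * s)) ^ τ ≤ 1 := Real.rpow_le_one hratio0 hratio1 hτ.le
    calc G s δ ≤ 1 * δ ^ (α - 1) * (1 - δ) ^ (ν - 1) := by
          refine mul_le_mul_of_nonneg_right (mul_le_mul_of_nonneg_right h2 ?_) ?_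
          · exact Real.rpow_nonneg hδ0.le _
          · exact Real.rpow_nonneg (by linarith) _
      _ = δ ^ (α - 1) * (1 - δ) ^ (ν - 1) := by ring
  -- main computation
  simp_rw [key]
  have step1 : ∑ i, ∑ j, c i * c j * ((1 / betaFn α ν) * ∫ δ in Set.Ioo (0:ℝ) 1,
        G (inner ℝ (x i) (x j)) δ)
      = (1 / betaFn α ν) * ∫ δ in Set.Ioo (0:ℝ) 1,
          ∑ p ∈ Finset.univ ×ˢ Finset.univ,
            c p.1 * c p.2 * G (inner ℝ (x p.1) (x p.2)) δ := by
    rw [MeasureTheory.integral_finset_sum _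
      (fun p _ => ((hInt _ (hs p.1 p.2)).const_mul (c p.1 * c p.2)))]
    rw [Finset.mul_sum, ← Finset.sum_product']
    refine Finset.sum_congr rfl fun p _ => ?_
    rw [MeasureTheory.integral_const_mul]
    ring
  rw [step1]
  refine mul_nonneg hB (setIntegral_nonneg measurableSet_Ioo fun δ hδ => ?_)
  obtain ⟨hδ0, hδ1⟩ := hδ
  have hfac : ∀ p : Fin m × Fin m, G (inner ℝ (x p.1) (x p.2)) δ
      = ((1 - δ) ^ τ * δ ^ (α - 1) * (1 - δ) ^ (ν - 1)) *
        (1 / (1 - δ * (inner ℝ (x p.1) (x p.2) : ℝ))) ^ τ := by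
    intro p
    have hrp := hr _ δ (hs p.1 p.2) ⟨hδ0, hδ1⟩
    rw [hG]
    simp only []
    rw [div_eq_mul_one_div, Real.mul_rpow (by linarith) (by positivity)]
    ring
  calc (0:ℝ) ≤ ((1 - δ) ^ τ * δ ^ (α - 1) * (1 - δ) ^ (ν - 1)) *
        ∑ i, ∑ j, c i * c j * (1 / (1 - δ * (inner ℝ (x i) (x j) : ℝ))) ^ τ := by
        refine mul_nonneg ?_ (inv_psd x hx c hτ hδ0.le hδ1)
        have : (0:ℝ) ≤ 1 - δ := by linarith
        positivity
    _ = ∑ p ∈ Finset.univ ×ˢ Finset.univ, c p.1 * c p.2 * G (inner ℝ (x p.1) (x p.2)) δ := by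
        rw [← Finset.sum_product', Finset.mul_sum]
        refine Finset.sum_congr rfl fun p _ => ?_
        rw [hfac p]
        ring
end

section
/- Let τ, α, ν > 0 and define F_{τ,α,ν}(θ) = (1/B(α,ν)) ∫₀¹ ((1-δ)/(1-δ cos θ))^τ δ^{α-1} (1-δ)^{ν-1} dδ. Set b_n = (B(α,ν+τ)/B(α,ν)) · (α)_n (τ)_n / ((α+ν+τ)_n · n!) for n = 0, 1, 2, …. Then each b_n ≥ 0, the series Σ_{n=0}^∞ b_n converges with Σ_{n=0}^∞ b_n = 1, and for every θ ∈ [0,π], F_{τ,α,ν}(θ) = Σ_{n=0}^∞ b_n (cos θ)^n. -/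
open Real MeasureTheory

/-- Pochhammer symbol (rising factorial) `(x)_n = x(x+1)⋯(x+n-1)`. -/
noncomputable def poch (x : ℝ) (n : ℕ) : ℝ := Polynomial.eval x (ascPochhammer ℝ n)

/-- Schoenberg coefficients of the `F`-family:
`b_n = (B(α,ν+τ)/B(α,ν)) (α)_n (τ)_n / ((α+ν+τ)_n n!)`. -/
noncomputable def schoenbergCoeff (τ α ν : ℝ) (n : ℕ) : ℝ :=
  (betaFn α (ν + τ) / betaFn α ν) *
    (poch α n * poch τ n / (poch (α + ν + τ) n * n.factorial))

lemma poch_zero (x : ℝ) : poch x 0 = 1 := by simp [poch]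

lemma poch_succ (x : ℝ) (n : ℕ) : poch x (n + 1) = poch x n * (x + n) := by
  simp [poch, ascPochhammer_succ_right]

lemma poch_pos {x : ℝ} (hx : 0 < x) (n : ℕ) : 0 < poch x n := by
  induction n with
  | zero => simp [poch_zero]
  | succ n ih => rw [poch_succ]; positivity

lemma Gamma_add_nat {x : ℝ} (hx : 0 < x) (n : ℕ) :
    Real.Gamma (x + n) = poch x n * Real.Gamma x := by
  induction n with
  | zero => simp [poch_zero]
  | succ n ih =>
    have h : x + (n + 1 : ℕ) = (x + n) + 1 := by push_cast; ring
    rw [h, Real.Gamma_add_one (by positivity), ih, poch_succ]; ring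

lemma betaFn_pos {a b : ℝ} (ha : 0 < a) (hb : 0 < b) : 0 < betaFn a b := by
  unfold betaFn
  have := Real.Gamma_pos_of_pos ha
  have := Real.Gamma_pos_of_pos hb
  have := Real.Gamma_pos_of_pos (by linarith : (0:ℝ) < a + b)
  positivity

lemma betaFn_add_nat {a b : ℝ} (ha : 0 < a) (hb : 0 < b) (n : ℕ) :
    betaFn (a + n) b = betaFn a b * poch a n / poch (a + b) n := by
  unfold betaFn
  have h1 : a + (n:ℝ) + b = (a + b) + n := by ring
  rw [Gamma_add_nat ha, h1, Gamma_add_nat (by linarith), ]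
  have g1 := (Real.Gamma_pos_of_pos ha).ne'
  have g2 := (Real.Gamma_pos_of_pos hb).ne'
  have g3 := (Real.Gamma_pos_of_pos (by linarith : (0:ℝ) < a + b)).ne'
  have p1 := (poch_pos ha n).ne'
  have p2 := (poch_pos (by linarith : (0:ℝ) < a + b) n).ne'
  field_simp

open Filter

lemma ratio_tendsto (β : ℝ) : Tendsto (fun n : ℕ => |β + n| / (n + 1)) atTop (nhds 1) := by
  have h0 : Tendsto (fun n : ℕ => (β - 1) / ((n : ℝ) + 1)) atTop (nhds 0) :=
    Tendsto.div_atTop tendsto_const_nhds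
      (tendsto_atTop_add_const_right _ 1 tendsto_natCast_atTop_atTop)
  have h1 : Tendsto (fun n : ℕ => (β - 1) / ((n : ℝ) + 1) + 1) atTop (nhds 1) := by
    simpa using h0.add (tendsto_const_nhds (x := (1:ℝ)))
  have h2 : Tendsto (fun n : ℕ => (β + n) / ((n : ℝ) + 1)) atTop (nhds 1) := by
    refine h1.congr (fun n => ?_)
    field_simp
    ring
  have h3 := h2.abs
  rw [abs_one] at h3
  refine h3.congr' ?_
  filter_upwards [eventually_ge_atTop (Nat.ceil |β|)] with n hn
  have hβn : 0 ≤ β + n := by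
    have : |β| ≤ (n : ℝ) := by
      calc |β| ≤ (Nat.ceil |β| : ℝ) := Nat.le_ceil _
      _ ≤ n := by exact_mod_cast hn
    have := neg_abs_le β; linarith
  rw [abs_div, abs_of_nonneg hβn, abs_of_pos (by positivity : (0:ℝ) < (n:ℝ)+1)]

lemma norm_ratio (β y : ℝ) (n : ℕ) :
    ‖poch β (n+1) / (n+1).factorial * y ^ (n+1)‖ =
      ‖poch β n / n.factorial * y ^ n‖ * (|β + n| / (n + 1) * |y|) := by
  rw [poch_succ, Nat.factorial_succ, pow_succ]
  have h1 : |((n:ℝ)+1)| = (n:ℝ)+1 := abs_of_pos (by positivity)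
  have h2 : (0:ℝ) < n.factorial := by exact_mod_cast n.factorial_pos
  push_cast
  simp only [Real.norm_eq_abs, abs_mul, abs_div, h1, abs_of_pos h2]
  field_simp

/-- Ratio-test summability of the binomial-type series. -/
lemma summable_poch_mul_geom (β : ℝ) {y : ℝ} (hy : |y| < 1) :
    Summable (fun n : ℕ => poch β n / n.factorial * y ^ n) := by
  set r : ℝ := (1 + |y|) / 2 with hr
  have hr1 : r < 1 := by rw [hr]; linarith
  have hyr : |y| < r := by rw [hr]; linarith [abs_nonneg y]
  refine summable_of_ratio_norm_eventually_le hr1 ?_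
  have htend : Tendsto (fun n : ℕ => |β + n| / (n + 1) * |y|) atTop (nhds (|y|)) := by
    simpa using (ratio_tendsto β).mul (tendsto_const_nhds (x := |y|))
  filter_upwards [htend.eventually_lt_const hyr] with n hn
  rw [norm_ratio]
  calc ‖poch β n / n.factorial * y ^ n‖ * (|β + n| / (n + 1) * |y|)
      ≤ ‖poch β n / n.factorial * y ^ n‖ * r :=
        mul_le_mul_of_nonneg_left hn.le (norm_nonneg _)
    _ = r * ‖poch β n / n.factorial * y ^ n‖ := mul_comm _ _
open Filter in
lemma poch_succ_left (τ : ℝ) (n : ℕ) : poch τ (n + 1) = τ * poch (τ + 1) n := by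
  simp [poch, ascPochhammer_succ_left, Polynomial.eval_comp]

lemma poch_shift (τ : ℝ) (n : ℕ) : poch τ n * (τ + n) = τ * poch (τ + 1) n := by
  rw [← poch_succ τ n, poch_succ_left]

lemma summable_deriv_series (τ : ℝ) {r : ℝ} (hr : 0 ≤ r) (hr1 : r < 1) :
    Summable (fun n : ℕ => poch τ n / n.factorial * ((n : ℝ) * r ^ (n - 1))) := by
  rw [← summable_nat_add_iff 1]
  have : Summable (fun n : ℕ => τ * (poch (τ + 1) n / n.factorial * r ^ n)) :=
    (summable_poch_mul_geom (τ + 1) (by rwa [abs_of_nonneg hr])).mul_left τ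
  refine this.congr (fun n => ?_)
  rw [poch_succ_left, Nat.factorial_succ, Nat.add_sub_cancel]
  have h1 : ((n:ℝ) + 1) ≠ 0 := by positivity
  have h2 : (n.factorial : ℝ) ≠ 0 := by exact_mod_cast n.factorial_pos.ne'
  push_cast
  field_simp

lemma summable_shifted (τ : ℝ) {y : ℝ} (hy : |y| < 1) :
    Summable (fun n : ℕ => (τ + (n:ℝ)) * (poch τ n / n.factorial * y ^ n)) := by
  have : Summable (fun n : ℕ => τ * (poch (τ + 1) n / n.factorial * y ^ n)) :=
    (summable_poch_mul_geom (τ + 1) hy).mul_left τ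
  refine this.congr (fun n => ?_)
  have h2 : (n.factorial : ℝ) ≠ 0 := by exact_mod_cast n.factorial_pos.ne'
  calc τ * (poch (τ + 1) n / n.factorial * y ^ n)
      = (τ * poch (τ + 1) n) * y ^ n / n.factorial := by ring
    _ = (poch τ n * (τ + n)) * y ^ n / n.factorial := by rw [← poch_shift τ n]
    _ = (τ + n) * (poch τ n / n.factorial * y ^ n) := by ring

lemma hasDerivAt_S {τ : ℝ} (hτ : 0 < τ) {y : ℝ} (hy : |y| < 1) :
    HasDerivAt (fun z : ℝ => ∑' n : ℕ, poch τ n / n.factorial * z ^ n)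
      (∑' n : ℕ, poch τ n / n.factorial * ((n : ℝ) * y ^ (n - 1))) y := by
  set r : ℝ := (1 + |y|) / 2 with hrdef
  have hrpos : 0 < r := by rw [hrdef]; positivity
  have hr1 : r < 1 := by rw [hrdef]; linarith
  have hyr : |y| < r := by rw [hrdef]; linarith [abs_nonneg y]
  refine hasDerivAt_tsum_of_isPreconnected (summable_deriv_series τ hrpos.le hr1)
    (isOpen_Ioo (a := -r) (b := r)) (convex_Ioo _ _).isPreconnected
    (fun n z _ => ((hasDerivAt_pow n z).const_mul (poch τ n / n.factorial))) ?_
    (Set.mem_Ioo.mpr ⟨by linarith, hrpos⟩) ?_ (Set.mem_Ioo.mpr (abs_lt.mp hyr))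
  · intro n z hz
    have hzr : |z| ≤ r := (abs_lt.mpr ⟨hz.1, hz.2⟩).le
    have hpos := (poch_pos hτ n).le
    have hfac : (0:ℝ) < n.factorial := by exact_mod_cast n.factorial_pos
    rw [Real.norm_eq_abs, abs_mul, abs_mul,
      abs_of_nonneg (by positivity : (0:ℝ) ≤ poch τ n / n.factorial),
      abs_of_nonneg (Nat.cast_nonneg n)]
    gcongr
    calc |z ^ (n-1)| = |z| ^ (n-1) := abs_pow z (n-1)
      _ ≤ r ^ (n-1) := pow_le_pow_left₀ (abs_nonneg z) hzr _
  · apply summable_of_ne_finset_zero (s := {0})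
    intro n hn
    simp only [Finset.mem_singleton] at hn
    simp [zero_pow hn]

lemma ode_identity (τ : ℝ) {y : ℝ} (hy : |y| < 1) :
    (1 - y) * (∑' n : ℕ, poch τ n / n.factorial * ((n : ℝ) * y ^ (n - 1)))
      = τ * ∑' n : ℕ, poch τ n / n.factorial * y ^ n := by
  have key : ∀ n : ℕ, poch τ (n+1) / (n+1).factorial * (((n:ℝ)+1) * y ^ n)
      = (τ + n) * (poch τ n / n.factorial * y ^ n) := by
    intro n
    rw [poch_succ, Nat.factorial_succ]
    have h1 : ((n:ℝ) + 1) ≠ 0 := by positivity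
    have h2 : (n.factorial : ℝ) ≠ 0 := by exact_mod_cast n.factorial_pos.ne'
    push_cast
    field_simp
  have s1 : Summable (fun n : ℕ => (τ + (n:ℝ)) * (poch τ n / n.factorial * y ^ n)) :=
    summable_shifted τ hy
  have s0 : Summable (fun n : ℕ => poch τ n / n.factorial * y ^ n) :=
    summable_poch_mul_geom τ hy
  have s2 : Summable (fun n : ℕ => ((n:ℝ)) * (poch τ n / n.factorial * y ^ n)) := by
    refine (s1.sub (s0.mul_left τ)).congr (fun n => ?_)
    ring
  have sumf : Summable (fun n : ℕ => poch τ n / n.factorial * ((n:ℝ) * y ^ (n - 1))) := by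
    rw [← summable_nat_add_iff 1]
    refine s1.congr (fun n => ?_)
    rw [Nat.add_sub_cancel]
    push_cast
    exact (key n).symm
  have dag : (∑' n : ℕ, poch τ n / n.factorial * ((n:ℝ) * y ^ (n - 1)))
      = ∑' n : ℕ, (τ + (n:ℝ)) * (poch τ n / n.factorial * y ^ n) := by
    rw [Summable.tsum_eq_zero_add sumf]
    simp only [Nat.cast_zero, zero_mul, mul_zero, zero_add]
    refine tsum_congr (fun n => ?_)
    rw [Nat.add_sub_cancel]
    push_cast
    exact key n
  have ddag : y * (∑' n : ℕ, poch τ n / n.factorial * ((n:ℝ) * y ^ (n - 1)))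
      = ∑' n : ℕ, ((n:ℝ)) * (poch τ n / n.factorial * y ^ n) := by
    rw [← tsum_mul_left]
    refine tsum_congr (fun n => ?_)
    cases n with
    | zero => simp
    | succ m =>
      rw [Nat.add_sub_cancel, pow_succ]
      ring
  have expand : (1 - y) * (∑' n : ℕ, poch τ n / n.factorial * ((n:ℝ) * y ^ (n - 1)))
      = (∑' n : ℕ, poch τ n / n.factorial * ((n:ℝ) * y ^ (n - 1)))
        - y * (∑' n : ℕ, poch τ n / n.factorial * ((n:ℝ) * y ^ (n - 1))) := by ring
  rw [expand, ddag]
  nth_rewrite 1 [dag]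
  rw [← Summable.tsum_sub s1 s2, ← tsum_mul_left]
  refine tsum_congr (fun n => ?_)
  ring

lemma hasSum_binomial {τ : ℝ} (hτ : 0 < τ) {y : ℝ} (hy : |y| < 1) :
    HasSum (fun n : ℕ => poch τ n / n.factorial * y ^ n) ((1 - y) ^ (-τ)) := by
  have hderiv : ∀ z : ℝ, |z| < 1 →
      HasDerivAt (fun w : ℝ => (1 - w) ^ τ * ∑' n : ℕ, poch τ n / n.factorial * w ^ n) 0 z := by
    intro z hz
    have hz1 : 0 < 1 - z := by have := abs_lt.mp hz; linarith [this.2]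
    have hP : HasDerivAt (fun w : ℝ => (1 - w) ^ τ) (-(τ * (1 - z) ^ (τ - 1))) z := by
      have h1 : HasDerivAt (fun w : ℝ => (1 - w)) (-1) z := by
        simpa using (hasDerivAt_id z).const_sub 1
      have h2 := (Real.hasDerivAt_rpow_const (x := 1 - z) (p := τ) (Or.inl hz1.ne')).comp z h1
      exact h2.congr_deriv (by ring)
    have hQ := hasDerivAt_S hτ hz
    have hmul := hP.mul hQ
    refine hmul.congr_deriv (Eq.symm ?_)
    have hident := ode_identity τ hz
    have hpow : (1 - z) ^ τ = (1 - z) ^ (τ - 1) * (1 - z) := by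
      nth_rewrite 1 [show τ = (τ - 1) + 1 by ring]
      rw [Real.rpow_add hz1, Real.rpow_one]
    rw [hpow]
    linear_combination (1 - z) ^ (τ - 1) * hident.symm
  have hy1 : 0 < 1 - y := by have := abs_lt.mp hy; linarith [this.2]
  have hmem : ∀ z ∈ Set.Icc (min 0 y) (max 0 y), |z| < 1 := by
    intro z hz
    rcases abs_lt.mp hy with ⟨h1, h2⟩
    rcases hz with ⟨hz1, hz2⟩
    rw [abs_lt]
    constructor
    · calc (-1:ℝ) < min 0 y := by rcases le_total 0 y with h|h <;> simp [min_eq_left, min_eq_right, h] <;> linarith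
        _ ≤ z := hz1
    · calc z ≤ max 0 y := hz2
        _ < 1 := by rcases le_total 0 y with h|h <;> simp [max_eq_left, max_eq_right, h] <;> linarith
  have hconst : (1 - y) ^ τ * (∑' n : ℕ, poch τ n / n.factorial * y ^ n)
      = (1 - (0:ℝ)) ^ τ * (∑' n : ℕ, poch τ n / n.factorial * (0:ℝ) ^ n) := by
    set f : ℝ → ℝ := fun w => (1 - w) ^ τ * ∑' n : ℕ, poch τ n / n.factorial * w ^ n with hf
    have hcont : ContinuousOn f (Set.Icc (min 0 y) (max 0 y)) :=
      fun z hz => ((hderiv z (hmem z hz)).continuousAt).continuousWithinAt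
    have hd : ∀ z ∈ Set.Ico (min 0 y) (max 0 y), HasDerivWithinAt f 0 (Set.Ici z) z :=
      fun z hz => (hderiv z (hmem z ⟨hz.1, hz.2.le⟩)).hasDerivWithinAt
    have hcc := constant_of_has_deriv_right_zero hcont hd
    rcases le_total 0 y with h0y | h0y
    · have h1 : min 0 y = 0 := min_eq_left h0y
      have h2 := hcc y (by rw [h1]; exact ⟨h0y, le_max_right 0 y⟩)
      rw [h1] at h2
      exact h2
    · have h1 : min 0 y = y := min_eq_right h0y
      have h2 := hcc 0 (by rw [h1]; exact ⟨h0y, le_max_left 0 y⟩)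
      rw [h1] at h2
      exact h2.symm
  have hS0 : (∑' n : ℕ, poch τ n / n.factorial * (0:ℝ) ^ n) = 1 := by
    rw [tsum_eq_single 0 (fun n hn => by simp [zero_pow hn])]
    simp [poch_zero]
  rw [hS0, sub_zero, Real.one_rpow, mul_one] at hconst
  have hne : ((1 - y) ^ τ : ℝ) ≠ 0 := (Real.rpow_pos_of_pos hy1 τ).ne'
  have hSy : (∑' n : ℕ, poch τ n / n.factorial * y ^ n) = (1 - y) ^ (-τ) := by
    rw [Real.rpow_neg hy1.le]
    exact eq_inv_of_mul_eq_one_right hconst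
  exact hSy ▸ (summable_poch_mul_geom τ hy).hasSum
lemma complex_eq_on_Ioo {a b : ℝ} :
    ∀ x ∈ Set.Ioo (0:ℝ) 1,
      ((x:ℂ) ^ ((a:ℂ) - 1) * ((1:ℂ) - (x:ℂ)) ^ ((b:ℂ) - 1))
        = ((x ^ (a-1) * (1-x) ^ (b-1) : ℝ) : ℂ) := by
  intro x hx
  have hx0 : (0:ℝ) ≤ x := hx.1.le
  have hx1 : (0:ℝ) ≤ 1 - x := by linarith [hx.2]
  have e1 : ((x:ℂ)) ^ ((a:ℂ) - 1) = ((x ^ (a-1) : ℝ) : ℂ) := by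
    rw [Complex.ofReal_cpow hx0]
    push_cast
    ring_nf
  have e2 : ((1:ℂ) - (x:ℂ)) ^ ((b:ℂ) - 1) = (((1-x) ^ (b-1) : ℝ) : ℂ) := by
    rw [show ((1:ℂ) - (x:ℂ)) = (((1 - x : ℝ)):ℂ) by push_cast; ring]
    rw [Complex.ofReal_cpow hx1]
    push_cast
    ring_nf
  rw [e1, e2]
  push_cast
  ring

lemma integrableOn_beta {a b : ℝ} (ha : 0 < a) (hb : 0 < b) :
    IntegrableOn (fun x : ℝ => x ^ (a-1) * (1-x) ^ (b-1)) (Set.Ioo 0 1) := by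
  have hc := Complex.betaIntegral_convergent (u := (a:ℂ)) (v := (b:ℂ))
    (by simpa using ha) (by simpa using hb)
  rw [intervalIntegrable_iff, Set.uIoc_of_le (by norm_num : (0:ℝ) ≤ 1)] at hc
  have hre : IntegrableOn (fun x : ℝ =>
      Complex.re ((x:ℂ) ^ ((a:ℂ) - 1) * ((1:ℂ) - (x:ℂ)) ^ ((b:ℂ) - 1))) (Set.Ioc 0 1) := hc.re
  have h2 := hre.mono_set Set.Ioo_subset_Ioc_self
  refine (h2.congr_fun ?_ measurableSet_Ioo)
  intro x hx
  show Complex.re ((x:ℂ) ^ ((a:ℂ) - 1) * ((1:ℂ) - (x:ℂ)) ^ ((b:ℂ) - 1))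
      = x ^ (a-1) * (1-x) ^ (b-1)
  rw [complex_eq_on_Ioo x hx, Complex.ofReal_re]

lemma integral_beta {a b : ℝ} (ha : 0 < a) (hb : 0 < b) :
    ∫ x in Set.Ioo (0:ℝ) 1, x ^ (a-1) * (1-x) ^ (b-1) = betaFn a b := by
  have key := Complex.Gamma_mul_Gamma_eq_betaIntegral (s := (a:ℂ)) (t := (b:ℂ))
    (by simpa using ha) (by simpa using hb)
  have hbi : Complex.betaIntegral (a:ℂ) (b:ℂ)
      = ((∫ x in Set.Ioo (0:ℝ) 1, x ^ (a-1) * (1-x) ^ (b-1) : ℝ) : ℂ) := by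
    rw [Complex.betaIntegral, intervalIntegral.integral_of_le (by norm_num : (0:ℝ) ≤ 1),
      MeasureTheory.integral_Ioc_eq_integral_Ioo,
      MeasureTheory.setIntegral_congr_fun measurableSet_Ioo complex_eq_on_Ioo]
    exact integral_ofReal
  rw [hbi, show ((a:ℂ) + (b:ℂ)) = ((a + b : ℝ) : ℂ) by push_cast; ring,
    Complex.Gamma_ofReal, Complex.Gamma_ofReal, Complex.Gamma_ofReal] at key
  have key2 : Real.Gamma a * Real.Gamma b
      = Real.Gamma (a + b) * ∫ x in Set.Ioo (0:ℝ) 1, x ^ (a-1) * (1-x) ^ (b-1) := by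
    exact_mod_cast key
  have hne : Real.Gamma (a + b) ≠ 0 := (Real.Gamma_pos_of_pos (by linarith)).ne'
  rw [betaFn, key2]
  field_simp
lemma hasSum_Ffam_integral (τ α ν : ℝ) (hτ : 0 < τ) (hα : 0 < α) (hν : 0 < ν)
    {x : ℝ} (hx : |x| ≤ 1) :
    HasSum (fun n : ℕ => poch τ n / n.factorial * x ^ n * betaFn (α + n) (ν + τ))
      (∫ δ in Set.Ioo (0:ℝ) 1, ((1 - δ) / (1 - δ * x)) ^ τ * δ ^ (α - 1) * (1 - δ) ^ (ν - 1)) := by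
  set F : ℕ → ℝ → ℝ := fun n δ =>
    poch τ n / n.factorial * (δ * x) ^ n * (δ ^ (α - 1) * (1 - δ) ^ (τ + ν - 1)) with hF
  set bound : ℕ → ℝ → ℝ := fun n δ =>
    poch τ n / n.factorial * δ ^ n * (δ ^ (α - 1) * (1 - δ) ^ (τ + ν - 1)) with hbnd
  have hδfacts : ∀ δ ∈ Set.Ioo (0:ℝ) 1, 0 < δ ∧ δ < 1 ∧ 0 < 1 - δ ∧ |δ * x| ≤ δ ∧ 0 < 1 - δ * x := by
    intro δ hδ
    obtain ⟨h0, h1⟩ := hδ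
    have habs : |δ * x| ≤ δ := by
      rw [abs_mul, abs_of_pos h0]
      calc δ * |x| ≤ δ * 1 := by gcongr
        _ = δ := mul_one δ
    refine ⟨h0, h1, by linarith, habs, ?_⟩
    have : δ * x ≤ δ := le_trans (le_abs_self _) habs
    linarith
  have key : HasSum (fun n : ℕ => ∫ δ in Set.Ioo (0:ℝ) 1, F n δ)
      (∫ δ in Set.Ioo (0:ℝ) 1,
        ((1 - δ) / (1 - δ * x)) ^ τ * δ ^ (α - 1) * (1 - δ) ^ (ν - 1)) := by
    refine MeasureTheory.hasSum_integral_of_dominated_convergence bound ?_ ?_ ?_ ?_ ?_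
    · intro n
      apply Measurable.aestronglyMeasurable
      fun_prop
    · intro n
      rw [MeasureTheory.ae_restrict_iff' measurableSet_Ioo]
      refine MeasureTheory.ae_of_all _ (fun δ hδ => ?_)
      obtain ⟨h0, h1, h1δ, habs, hδx⟩ := hδfacts δ hδ
      have hc : (0:ℝ) ≤ δ ^ (α - 1) * (1 - δ) ^ (τ + ν - 1) := by positivity
      have hC : (0:ℝ) ≤ poch τ n / n.factorial := by
        have := (poch_pos hτ n).le
        positivity
      rw [hF, hbnd, Real.norm_eq_abs, abs_mul, abs_mul, abs_of_nonneg hC, abs_of_nonneg hc,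
        abs_pow]
      exact mul_le_mul_of_nonneg_right
        (mul_le_mul_of_nonneg_left (pow_le_pow_left₀ (abs_nonneg _) habs n) hC) hc
    · rw [MeasureTheory.ae_restrict_iff' measurableSet_Ioo]
      refine MeasureTheory.ae_of_all _ (fun δ hδ => ?_)
      obtain ⟨h0, h1, h1δ, habs, hδx⟩ := hδfacts δ hδ
      have hs := (summable_poch_mul_geom τ (by rwa [abs_of_pos h0] : |δ| < 1)).mul_right
        (δ ^ (α - 1) * (1 - δ) ^ (τ + ν - 1))
      exact hs.congr (fun n => by rw [hbnd])
    · have heq : Set.EqOn (fun δ : ℝ => δ ^ (α - 1) * (1 - δ) ^ (ν - 1))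
          (fun δ : ℝ => ∑' n : ℕ, bound n δ) (Set.Ioo 0 1) := by
        intro δ hδ
        obtain ⟨h0, h1, h1δ, habs, hδx⟩ := hδfacts δ hδ
        show δ ^ (α - 1) * (1 - δ) ^ (ν - 1) = ∑' n : ℕ, bound n δ
        have hbin := (hasSum_binomial hτ (by rwa [abs_of_pos h0] : |δ| < 1)).tsum_eq
        have : (∑' n : ℕ, bound n δ)
            = (∑' n : ℕ, poch τ n / n.factorial * δ ^ n) * (δ ^ (α - 1) * (1 - δ) ^ (τ + ν - 1)) := by
          rw [← tsum_mul_right]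
        rw [this, hbin]
        have hrw : (1 - δ) ^ (-τ) * (1 - δ) ^ (τ + ν - 1) = (1 - δ) ^ (ν - 1) := by
          rw [← Real.rpow_add h1δ]
          congr 1
          ring
        calc δ ^ (α - 1) * (1 - δ) ^ (ν - 1)
            = δ ^ (α - 1) * ((1 - δ) ^ (-τ) * (1 - δ) ^ (τ + ν - 1)) := by rw [hrw]
          _ = (1 - δ) ^ (-τ) * (δ ^ (α - 1) * (1 - δ) ^ (τ + ν - 1)) := by ring
      exact (integrableOn_beta hα hν).congr_fun heq measurableSet_Ioo
    · rw [MeasureTheory.ae_restrict_iff' measurableSet_Ioo]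
      refine MeasureTheory.ae_of_all _ (fun δ hδ => ?_)
      obtain ⟨h0, h1, h1δ, habs, hδx⟩ := hδfacts δ hδ
      have hbin := (hasSum_binomial hτ (lt_of_le_of_lt habs h1 : |δ * x| < 1)).mul_right
        (δ ^ (α - 1) * (1 - δ) ^ (τ + ν - 1))
      have hval : (1 - δ * x) ^ (-τ) * (δ ^ (α - 1) * (1 - δ) ^ (τ + ν - 1))
          = ((1 - δ) / (1 - δ * x)) ^ τ * δ ^ (α - 1) * (1 - δ) ^ (ν - 1) := by
        rw [Real.div_rpow h1δ.le hδx.le, Real.rpow_neg hδx.le,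
          show τ + ν - 1 = τ + (ν - 1) by ring, Real.rpow_add h1δ]
        field_simp
      rw [← hval]
      exact hbin
  have hint : ∀ n : ℕ, (∫ δ in Set.Ioo (0:ℝ) 1, F n δ)
      = poch τ n / n.factorial * x ^ n * betaFn (α + n) (ν + τ) := by
    intro n
    have heq : Set.EqOn (fun δ : ℝ => F n δ)
        (fun δ : ℝ => (poch τ n / n.factorial * x ^ n) *
          (δ ^ ((α + n) - 1) * (1 - δ) ^ ((ν + τ) - 1))) (Set.Ioo 0 1) := by
      intro δ hδ
      obtain ⟨h0, h1, h1δ, habs, hδx⟩ := hδfacts δ hδ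
      have hδn : δ ^ (n:ℕ) * δ ^ (α - 1) = δ ^ ((α + n) - 1) := by
        rw [← Real.rpow_natCast δ n, ← Real.rpow_add h0]
        congr 1
        ring
      show poch τ n / n.factorial * (δ * x) ^ n * (δ ^ (α - 1) * (1 - δ) ^ (τ + ν - 1))
          = poch τ n / n.factorial * x ^ n * (δ ^ ((α + n) - 1) * (1 - δ) ^ ((ν + τ) - 1))
      rw [mul_pow, ← hδn, show (ν + τ) - 1 = τ + ν - 1 by ring]
      ring
    rw [MeasureTheory.setIntegral_congr_fun measurableSet_Ioo heq,
      MeasureTheory.integral_const_mul, integral_beta (by positivity) (by positivity)]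
  exact (funext hint : (fun n : ℕ => ∫ δ in Set.Ioo (0:ℝ) 1, F n δ) = _) ▸ key

/-- The Schoenberg coefficients of the `F`-family are nonnegative, sum to one,
and `F_{τ,α,ν}(θ) = Σ_n b_n (cos θ)^n` for every `θ ∈ [0,π]`. -/
theorem Ffam_schoenberg_expansion (τ α ν : ℝ) (hτ : 0 < τ) (hα : 0 < α) (hν : 0 < ν) :
    (∀ n : ℕ, 0 ≤ schoenbergCoeff τ α ν n) ∧
    HasSum (fun n : ℕ => schoenbergCoeff τ α ν n) 1 ∧
    ∀ θ ∈ Set.Icc (0:ℝ) Real.pi,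
      HasSum (fun n : ℕ => schoenbergCoeff τ α ν n * Real.cos θ ^ n) (Ffam τ α ν θ) := by

  have hντ : 0 < ν + τ := by positivity
  have hαντ : 0 < α + ν + τ := by positivity
  have hβν : 0 < betaFn α ν := betaFn_pos hα hν
  have hβντ : 0 < betaFn α (ν + τ) := betaFn_pos hα hντ
  have hmain : ∀ θ ∈ Set.Icc (0:ℝ) Real.pi,
      HasSum (fun n : ℕ => schoenbergCoeff τ α ν n * Real.cos θ ^ n) (Ffam τ α ν θ) := by
    intro θ _
    have hx : |Real.cos θ| ≤ 1 := Real.abs_cos_le_one θ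
    have h := (hasSum_Ffam_integral τ α ν hτ hα hν hx).mul_left (1 / betaFn α ν)
    have hcoeff : (fun n : ℕ => 1 / betaFn α ν *
          (poch τ n / n.factorial * Real.cos θ ^ n * betaFn (α + n) (ν + τ)))
        = fun n : ℕ => schoenbergCoeff τ α ν n * Real.cos θ ^ n := by
      funext n
      rw [schoenbergCoeff, betaFn_add_nat hα hντ n,
        show α + (ν + τ) = α + ν + τ by ring]
      have p3 := (poch_pos hαντ n).ne'
      have hf : ((n.factorial : ℝ)) ≠ 0 := by exact_mod_cast n.factorial_pos.ne'
      field_simp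
    rw [hcoeff] at h
    exact h
  refine ⟨?_, ?_, hmain⟩
  · intro n
    have p1 := poch_pos hα n
    have p2 := poch_pos hτ n
    have p3 := poch_pos hαντ n
    have hf : (0:ℝ) < n.factorial := by exact_mod_cast n.factorial_pos
    rw [schoenbergCoeff]
    positivity
  · have h0 := hmain 0 ⟨le_refl 0, Real.pi_pos.le⟩
    rw [Real.cos_zero] at h0
    simp only [one_pow, mul_one] at h0
    have hI : (∫ δ in Set.Ioo (0:ℝ) 1,
        ((1 - δ) / (1 - δ * Real.cos 0)) ^ τ * δ ^ (α - 1) * (1 - δ) ^ (ν - 1)) = betaFn α ν := by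
      rw [MeasureTheory.setIntegral_congr_fun (g := fun δ : ℝ => δ ^ (α-1) * (1-δ) ^ (ν-1))
        measurableSet_Ioo ?_]
      · exact integral_beta hα hν
      · intro δ hδ
        have h1δ : (1:ℝ) - δ ≠ 0 := by have := hδ.2; intro h; simp only [Set.mem_Ioo] at hδ; linarith
        show ((1 - δ) / (1 - δ * Real.cos 0)) ^ τ * δ ^ (α - 1) * (1 - δ) ^ (ν - 1)
            = δ ^ (α-1) * (1-δ) ^ (ν-1)
        rw [Real.cos_zero, mul_one, div_self h1δ, Real.one_rpow, one_mul]
    have hFf : Ffam τ α ν 0 = 1 := by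
      rw [Ffam, hI]
      field_simp
    rwa [hFf] at h0
end

section
/- Let τ, α > 0 and ν > 1, and let F_{τ,α,ν}(θ) = (1/B(α,ν)) ∫₀¹ ((1-δ)/(1-δ cos θ))^τ δ^{α-1} (1-δ)^{ν-1} dδ. Then there exists a constant b > 0 such that lim_{θ → 0+} (F_{τ,α,ν}(0) - F_{τ,α,ν}(θ)) / θ² = b. In particular, the fractal index of a Gaussian random field on the 2-sphere with correlation F_{τ,α,ν} equals a = 2. -/
open Real MeasureTheory Filter

lemma betaIntegrable {a b : ℝ} (ha : 0 < a) (hb : 0 < b) :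
    IntegrableOn (fun x : ℝ => x ^ (a - 1) * (1 - x) ^ (b - 1)) (Set.Ioo 0 1) := by
  have h := Complex.betaIntegral_convergent (u := (a : ℂ)) (v := (b : ℂ))
    (by simpa using ha) (by simpa using hb)
  rw [intervalIntegrable_iff, Set.uIoc_of_le (by norm_num : (0:ℝ) ≤ 1)] at h
  have h2 : IntegrableOn
      (fun x : ℝ => ((x:ℂ) ^ ((a:ℂ) - 1) * (1 - (x:ℂ)) ^ ((b:ℂ) - 1)).re)
      (Set.Ioc 0 1) := by exact Integrable.re h
  refine (h2.mono_set Set.Ioo_subset_Ioc_self).congr_fun_ae ?_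
  filter_upwards [self_mem_ae_restrict measurableSet_Ioo] with x hx
  obtain ⟨hx0, hx1⟩ := hx
  have e1 : ((x:ℂ) ^ ((a:ℂ) - 1)) = ((x ^ (a-1) : ℝ) : ℂ) := by
    rw [Complex.ofReal_cpow hx0.le]; norm_cast
  have e2 : ((1 - (x:ℂ)) ^ ((b:ℂ) - 1)) = (((1 - x) ^ (b-1) : ℝ) : ℂ) := by
    rw [show (1 - (x:ℂ)) = ((1-x : ℝ) : ℂ) by push_cast; ring,
      Complex.ofReal_cpow (by linarith : (0:ℝ) ≤ 1 - x)]
    norm_cast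
  rw [e1, e2, ← Complex.ofReal_mul, Complex.ofReal_re]

lemma bernoulli_aux {τ x : ℝ} (hτ : 0 < τ) (hx : 0 ≤ x) :
    1 - (1 + x) ^ (-τ) ≤ (⌈τ⌉₊ : ℝ) * x := by
  have h1x : (1:ℝ) ≤ 1 + x := by linarith
  have hτn : -((⌈τ⌉₊ : ℝ)) ≤ -τ := by
    have := Nat.le_ceil τ; linarith
  have h2 : (1 + x) ^ (-((⌈τ⌉₊:ℝ))) ≤ (1 + x) ^ (-τ) :=
    Real.rpow_le_rpow_of_exponent_le h1x hτn
  have h3 : (1 + x) ^ (-((⌈τ⌉₊:ℝ))) = ((1 + x) ^ (⌈τ⌉₊ : ℕ) : ℝ)⁻¹ := by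
    rw [Real.rpow_neg (by positivity), Real.rpow_natCast]
  -- (1+x)⁻¹ = 1 + (-x/(1+x))
  have hx1 : (0:ℝ) < 1 + x := by linarith
  have h4 : ((1 + x)⁻¹ : ℝ) = 1 + (-(x / (1 + x))) := by field_simp; ring
  have h5 : 1 + (⌈τ⌉₊ : ℝ) * (-(x / (1 + x))) ≤ ((1 + x)⁻¹) ^ (⌈τ⌉₊ : ℕ) := by
    rw [h4]
    exact one_add_mul_le_pow (by
      have : x / (1 + x) ≤ 1 := by
        rw [div_le_one hx1]; linarith
      linarith) _
  have h6 : ((1 + x) ^ (⌈τ⌉₊ : ℕ) : ℝ)⁻¹ = ((1 + x)⁻¹) ^ (⌈τ⌉₊ : ℕ) := by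
    rw [inv_pow]
  have h7 : (⌈τ⌉₊ : ℝ) * (x / (1 + x)) ≤ (⌈τ⌉₊ : ℝ) * x := by
    apply mul_le_mul_of_nonneg_left _ (by positivity)
    rw [div_le_iff₀ hx1]; nlinarith
  nlinarith [h2, h3, h5, h6]

lemma rpow_alg {α ν δ : ℝ} (h0 : 0 < δ) (h1 : δ < 1) :
    δ / (1 - δ) * (δ ^ (α - 1) * (1 - δ) ^ (ν - 1)) = δ ^ α * (1 - δ) ^ (ν - 2) := by
  have hd : (0:ℝ) < 1 - δ := by linarith
  have e1 : δ ^ α = δ * δ ^ (α - 1) := by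
    rw [show α = 1 + (α - 1) by ring, Real.rpow_add h0, Real.rpow_one]; ring_nf
  have e2 : (1 - δ) ^ (ν - 2) = (1 - δ) ^ (ν - 1) * (1 - δ)⁻¹ := by
    rw [show ν - 2 = (ν - 1) + (-1) by ring, Real.rpow_add hd, Real.rpow_neg_one]
  rw [e1, e2]; field_simp

lemma cont_w (α ν : ℝ) : ContinuousOn (fun δ : ℝ => δ ^ (α - 1) * (1 - δ) ^ (ν - 1))
    (Set.Ioo 0 1) := by
  apply ContinuousOn.mul
  · exact continuousOn_id.rpow_const fun δ hδ => Or.inl (ne_of_gt hδ.1)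
  · exact (continuousOn_const.sub continuousOn_id).rpow_const
      fun δ hδ => Or.inl (by simp; linarith [hδ.2])

lemma den_pos {δ : ℝ} (θ : ℝ) (h0 : 0 < δ) (h1 : δ < 1) : 0 < 1 - δ * Real.cos θ := by
  nlinarith [Real.cos_le_one θ]

lemma cont_r (τ θ : ℝ) (hτ : 0 ≤ τ) :
    ContinuousOn (fun δ : ℝ => ((1 - δ) / (1 - δ * Real.cos θ)) ^ τ) (Set.Ioo 0 1) := by
  apply ContinuousOn.rpow_const _ fun δ hδ => Or.inr hτ
  exact (continuousOn_const.sub continuousOn_id).div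
    (continuousOn_const.sub (continuousOn_id.mul continuousOn_const))
    fun δ hδ => ne_of_gt (den_pos θ hδ.1 hδ.2)

lemma r_le_one {τ δ θ : ℝ} (hτ : 0 ≤ τ) (h0 : 0 < δ) (h1 : δ < 1) :
    ((1 - δ) / (1 - δ * Real.cos θ)) ^ τ ≤ 1 := by
  have hden := den_pos θ h0 h1
  have hnum : (0:ℝ) ≤ 1 - δ := by linarith
  apply Real.rpow_le_one (div_nonneg hnum hden.le) _ hτ
  rw [div_le_one hden]
  nlinarith [Real.cos_le_one θ]

lemma r_nonneg {τ δ θ : ℝ} (h0 : 0 < δ) (h1 : δ < 1) :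
    0 ≤ ((1 - δ) / (1 - δ * Real.cos θ)) ^ τ := by
  have hden := den_pos θ h0 h1
  have : (0:ℝ) ≤ (1 - δ) / (1 - δ * Real.cos θ) := by
    apply div_nonneg (by linarith) hden.le
  positivity

lemma ratio_eq {τ : ℝ} {δ θ : ℝ} (h0 : 0 < δ) (h1 : δ < 1) :
    ((1 - δ) / (1 - δ * Real.cos θ)) ^ τ
      = (1 + δ * (1 - Real.cos θ) / (1 - δ)) ^ (-τ) := by
  have hd : (0:ℝ) < 1 - δ := by linarith
  have hc : δ * Real.cos θ ≤ δ := by nlinarith [Real.cos_le_one θ]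
  have hden : (0:ℝ) < 1 - δ * Real.cos θ := by linarith
  have key : 1 + δ * (1 - Real.cos θ) / (1 - δ) = (1 - δ * Real.cos θ) / (1 - δ) := by
    field_simp; ring
  rw [key, show (1 - δ) / (1 - δ * Real.cos θ) = ((1 - δ * Real.cos θ) / (1 - δ))⁻¹ by
    rw [inv_div], Real.rpow_neg (by positivity), ← Real.inv_rpow (by positivity)]

lemma deriv_f {τ : ℝ} (hτ : 0 < τ) :
    HasDerivAt (fun t : ℝ => 1 - (1 + t) ^ (-τ)) τ 0 := by
  have h1 : HasDerivAt (fun y : ℝ => y ^ (-τ)) (-τ * (1:ℝ) ^ (-τ - 1)) 1 :=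
    Real.hasDerivAt_rpow_const (Or.inl one_ne_zero)
  have h2 : HasDerivAt (fun t : ℝ => 1 + t) 1 0 := by
    simpa using (hasDerivAt_id (0:ℝ)).const_add 1
  have h3 : HasDerivAt (fun t : ℝ => (1 + t) ^ (-τ)) (-τ) 0 := by
    have := HasDerivAt.comp 0 (by simpa using h1 :
      HasDerivAt (fun y : ℝ => y ^ (-τ)) (-τ) (1 + 0)) h2
    rw [mul_one] at this
    exact this
  have h4 := (hasDerivAt_const (0:ℝ) (1:ℝ)).sub h3
  rw [show (0:ℝ) - -τ = τ by ring] at h4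
  exact h4

lemma tendsto_one_sub_cos : Tendsto (fun θ : ℝ => (1 - Real.cos θ) / θ ^ 2)
    (nhdsWithin 0 (Set.Ioi 0)) (nhds (1/2)) := by
  have hsin : Tendsto (fun t : ℝ => Real.sin t / t) (nhdsWithin 0 {(0:ℝ)}ᶜ) (nhds 1) := by
    have h := (Real.hasDerivAt_sin 0)
    rw [hasDerivAt_iff_tendsto_slope] at h
    simp only [slope_fun_def_field, Real.sin_zero, Real.cos_zero, sub_zero] at h
    exact h
  have hhalf : Tendsto (fun θ : ℝ => θ / 2) (nhdsWithin 0 (Set.Ioi 0))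
      (nhdsWithin 0 {(0:ℝ)}ᶜ) := by
    rw [tendsto_nhdsWithin_iff]
    constructor
    · have : Tendsto (fun θ : ℝ => θ / 2) (nhds 0) (nhds 0) := by
        simpa using (tendsto_id (α := ℝ) (x := nhds 0)).div_const 2
      exact this.mono_left nhdsWithin_le_nhds
    · filter_upwards [self_mem_nhdsWithin] with θ hθ
      simp only [Set.mem_compl_iff, Set.mem_singleton_iff]
      have : (0:ℝ) < θ := hθ
      positivity
  have hcomp : Tendsto (fun θ : ℝ => Real.sin (θ/2) / (θ/2))
      (nhdsWithin 0 (Set.Ioi 0)) (nhds 1) := hsin.comp hhalf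
  have hsq : Tendsto (fun θ : ℝ => (Real.sin (θ/2) / (θ/2))^2 / 2)
      (nhdsWithin 0 (Set.Ioi 0)) (nhds (1/2)) := by
    have := (hcomp.pow 2).div_const 2
    norm_num at this ⊢
    exact this
  refine hsq.congr' ?_
  filter_upwards [self_mem_nhdsWithin] with θ hθ
  have hθ0 : (0:ℝ) < θ := hθ
  have h2 : Real.sin (θ/2)^2 = (1 - Real.cos θ)/2 := by
    have hcs := Real.cos_sq (θ/2)
    rw [show 2*(θ/2) = θ by ring] at hcs
    have h' := Real.sin_sq_add_cos_sq (θ/2)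
    nlinarith [hcs, h']
  field_simp
  nlinarith [h2, sq_nonneg θ]

lemma cos_lt_one_of_mem {θ : ℝ} (hθ : θ ∈ Set.Ioo 0 π) : Real.cos θ < 1 := by
  refine lt_of_le_of_ne (Real.cos_le_one θ) fun h => ?_
  have hpi := Real.pi_pos
  have := (Real.cos_eq_one_iff_of_lt_of_lt (by linarith [hθ.1, hθ.2] : -(2*π) < θ)
    (by linarith [hθ.2] : θ < 2*π)).mp h
  linarith [hθ.1]

lemma pointwise_tendsto (τ α ν : ℝ) (hτ : 0 < τ) {δ : ℝ} (h0 : 0 < δ) (h1 : δ < 1) :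
    Tendsto (fun θ : ℝ => (1 - ((1 - δ)/(1 - δ * Real.cos θ))^τ)/θ^2
        * (δ^(α-1) * (1-δ)^(ν-1)))
      (nhdsWithin 0 (Set.Ioi 0)) (nhds (τ/2 * (δ^α * (1-δ)^(ν-2)))) := by
  have hd : (0:ℝ) < 1 - δ := by linarith
  set w : ℝ := δ^(α-1) * (1-δ)^(ν-1) with hw
  set x : ℝ → ℝ := fun θ => δ * (1 - Real.cos θ) / (1 - δ) with hx
  -- slope limit
  have hslope : Tendsto (fun t : ℝ => (1 - (1 + t)^(-τ))/t) (nhdsWithin 0 {(0:ℝ)}ᶜ)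
      (nhds τ) := by
    have h := deriv_f hτ
    rw [hasDerivAt_iff_tendsto_slope] at h
    simp only [slope_fun_def_field, add_zero, Real.one_rpow, sub_self, sub_zero] at h
    exact h
  -- x tends to 0 within ≠ 0
  have hxt : Tendsto x (nhdsWithin 0 (Set.Ioi 0)) (nhdsWithin 0 {(0:ℝ)}ᶜ) := by
    rw [tendsto_nhdsWithin_iff]
    constructor
    · have hc : Continuous x := by
        exact ((continuous_const.mul (continuous_const.sub Real.continuous_cos)).div_const _)
      have := hc.tendsto 0
      simp only [hx, Real.cos_zero, sub_self, mul_zero, zero_div] at this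
      exact this.mono_left nhdsWithin_le_nhds
    · filter_upwards [Ioo_mem_nhdsGT_of_mem (Set.mem_Ico.mpr ⟨le_refl 0, Real.pi_pos⟩)]
        with θ hθ
      have hcos := cos_lt_one_of_mem hθ
      have : 0 < x θ := by
        apply div_pos (mul_pos h0 (by linarith)) hd
      simp only [Set.mem_compl_iff, Set.mem_singleton_iff]
      exact ne_of_gt this
  have hA : Tendsto (fun θ : ℝ => (1 - (1 + x θ)^(-τ))/(x θ))
      (nhdsWithin 0 (Set.Ioi 0)) (nhds τ) := hslope.comp hxt
  -- product
  have hprod : Tendsto (fun θ : ℝ => ((1 - (1 + x θ)^(-τ))/(x θ))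
        * (δ/(1-δ) * ((1 - Real.cos θ)/θ^2) * w))
      (nhdsWithin 0 (Set.Ioi 0)) (nhds (τ * (δ/(1-δ) * (1/2) * w))) := by
    exact hA.mul (((tendsto_const_nhds.mul tendsto_one_sub_cos).mul tendsto_const_nhds))
  have hval : τ * (δ/(1-δ) * (1/2) * w) = τ/2 * (δ^α * (1-δ)^(ν-2)) := by
    rw [hw, show δ/(1-δ) * (1/2) * (δ^(α-1) * (1-δ)^(ν-1))
      = (δ/(1-δ) * (δ^(α-1) * (1-δ)^(ν-1))) * (1/2) by ring, rpow_alg h0 h1]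
    ring
  rw [← hval]
  refine hprod.congr' ?_
  filter_upwards [Ioo_mem_nhdsGT_of_mem (Set.mem_Ico.mpr ⟨le_refl 0, Real.pi_pos⟩)]
    with θ hθ
  have hθ0 : 0 < θ := hθ.1
  have hcos := cos_lt_one_of_mem hθ
  have hxpos : 0 < x θ := div_pos (mul_pos h0 (by linarith)) hd
  rw [ratio_eq h0 h1]
  have h1c : (0:ℝ) < 1 - Real.cos θ := by linarith
  show (1 - (1 + δ * (1 - Real.cos θ) / (1 - δ)) ^ (-τ))/(δ * (1 - Real.cos θ) / (1 - δ))
      * (δ/(1-δ) * ((1 - Real.cos θ)/θ^2) * (δ^(α-1) * (1-δ)^(ν-1)))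
    = (1 - (1 + δ * (1 - Real.cos θ) / (1 - δ)) ^ (-τ))/θ^2 * (δ^(α-1) * (1-δ)^(ν-1))
  generalize (1 + δ * (1 - Real.cos θ) / (1 - δ)) ^ (-τ) = y
  field_simp

lemma bound_lemma {τ α ν θ δ : ℝ} (hτ : 0 < τ) (hθ : 0 < θ) (h0 : 0 < δ) (h1 : δ < 1) :
    ‖(1 - ((1 - δ)/(1 - δ * Real.cos θ))^τ)/θ^2 * (δ^(α-1) * (1-δ)^(ν-1))‖
      ≤ (⌈τ⌉₊ : ℝ)/2 * (δ^α * (1-δ)^(ν-2)) := by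
  have hd : (0:ℝ) < 1 - δ := by linarith
  have hwpos : (0:ℝ) < δ^(α-1) * (1-δ)^(ν-1) := by positivity
  have hr1 := r_le_one (τ := τ) (θ := θ) hτ.le h0 h1
  have hx0 : (0:ℝ) ≤ δ * (1 - Real.cos θ) / (1 - δ) := by
    have := Real.cos_le_one θ
    apply div_nonneg (mul_nonneg h0.le (by linarith)) hd.le
  have hkey : 1 - ((1 - δ)/(1 - δ * Real.cos θ))^τ
      ≤ (⌈τ⌉₊ : ℝ) * (δ * (1 - Real.cos θ) / (1 - δ)) := by
    rw [ratio_eq h0 h1]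
    exact bernoulli_aux hτ hx0
  have hnonneg : 0 ≤ (1 - ((1 - δ)/(1 - δ * Real.cos θ))^τ)/θ^2
      * (δ^(α-1) * (1-δ)^(ν-1)) := by
    apply mul_nonneg (div_nonneg (by linarith) (by positivity)) hwpos.le
  rw [Real.norm_eq_abs, abs_of_nonneg hnonneg]
  have hcos : 1 - Real.cos θ ≤ θ^2/2 := by
    have := Real.one_sub_sq_div_two_le_cos (x := θ)
    linarith
  have hn0 : (0:ℝ) ≤ (⌈τ⌉₊ : ℝ) := by positivity
  have step1 : (1 - ((1 - δ)/(1 - δ * Real.cos θ))^τ)/θ^2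
      ≤ (⌈τ⌉₊ : ℝ)/2 * (δ/(1-δ)) := by
    rw [div_le_iff₀ (by positivity)]
    calc 1 - ((1 - δ)/(1 - δ * Real.cos θ))^τ
        ≤ (⌈τ⌉₊ : ℝ) * (δ * (1 - Real.cos θ) / (1 - δ)) := hkey
      _ = (⌈τ⌉₊ : ℝ) * (δ/(1-δ)) * (1 - Real.cos θ) := by ring
      _ ≤ (⌈τ⌉₊ : ℝ) * (δ/(1-δ)) * (θ^2/2) := by
          apply mul_le_mul_of_nonneg_left hcos
          positivity
      _ = (⌈τ⌉₊ : ℝ)/2 * (δ/(1-δ)) * θ^2 := by ring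
  calc (1 - ((1 - δ)/(1 - δ * Real.cos θ))^τ)/θ^2 * (δ^(α-1) * (1-δ)^(ν-1))
      ≤ (⌈τ⌉₊ : ℝ)/2 * (δ/(1-δ)) * (δ^(α-1) * (1-δ)^(ν-1)) := by
        exact mul_le_mul_of_nonneg_right step1 hwpos.le
    _ = (⌈τ⌉₊ : ℝ)/2 * (δ/(1-δ) * (δ^(α-1) * (1-δ)^(ν-1))) := by ring
    _ = (⌈τ⌉₊ : ℝ)/2 * (δ^α * (1-δ)^(ν-2)) := by rw [rpow_alg h0 h1]

/-- For `ν > 1` the fractal index of the `F`-family is `a = 2`: there is a constant `b > 0`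
with `lim_{θ→0⁺} (F_{τ,α,ν}(0) - F_{τ,α,ν}(θ))/θ² = b`. -/
theorem Ffam_fractal_index_of_one_lt_nu (τ α ν : ℝ)
    (hτ : 0 < τ) (hα : 0 < α) (hν : 1 < ν) :
    ∃ b : ℝ, 0 < b ∧
      Filter.Tendsto (fun θ : ℝ => (Ffam τ α ν 0 - Ffam τ α ν θ) / θ ^ 2)
        (nhdsWithin 0 (Set.Ioi 0)) (nhds b) := by
  have hν0 : (0:ℝ) < ν := by linarith
  have hν1 : (0:ℝ) < ν - 1 := by linarith
  have hB : 0 < betaFn α ν :=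
    div_pos (mul_pos (Real.Gamma_pos_of_pos hα) (Real.Gamma_pos_of_pos hν0))
      (Real.Gamma_pos_of_pos (by positivity))
  -- integrability of the weight
  have hw : IntegrableOn (fun δ : ℝ => δ ^ (α - 1) * (1 - δ) ^ (ν - 1)) (Set.Ioo 0 1) :=
    betaIntegrable hα hν0
  -- integrability of the modified weight
  have hw2 : IntegrableOn (fun δ : ℝ => δ ^ α * (1 - δ) ^ (ν - 2)) (Set.Ioo 0 1) := by
    have := betaIntegrable (show (0:ℝ) < α + 1 by linarith) hν1
    simpa [show α + 1 - 1 = α by ring, show ν - 1 - 1 = ν - 2 by ring] using this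
  -- measurability
  have hmeas : ∀ θ : ℝ, AEStronglyMeasurable
      (fun δ : ℝ => ((1 - δ) / (1 - δ * Real.cos θ)) ^ τ * δ ^ (α - 1) * (1 - δ) ^ (ν - 1))
      (volume.restrict (Set.Ioo 0 1)) := by
    intro θ
    apply ContinuousOn.aestronglyMeasurable _ measurableSet_Ioo
    have := ((cont_r τ θ hτ.le).mul (cont_w α ν))
    refine this.congr fun δ hδ => ?_
    rw [Pi.mul_apply]; ring
  -- integrability of the full integrand
  have hrw : ∀ θ : ℝ, IntegrableOn
      (fun δ : ℝ => ((1 - δ) / (1 - δ * Real.cos θ)) ^ τ * δ ^ (α - 1) * (1 - δ) ^ (ν - 1))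
      (Set.Ioo 0 1) := by
    intro θ
    apply Integrable.mono hw (hmeas θ)
    filter_upwards [self_mem_ae_restrict measurableSet_Ioo] with δ hδ
    obtain ⟨h0, h1⟩ := hδ
    have hwpos : (0:ℝ) < δ ^ (α - 1) * (1 - δ) ^ (ν - 1) := by
      have : (0:ℝ) < 1 - δ := by linarith
      positivity
    rw [Real.norm_eq_abs, Real.norm_eq_abs, abs_of_nonneg (by
        have := r_nonneg (τ := τ) (θ := θ) h0 h1
        nlinarith), abs_of_nonneg hwpos.le, mul_assoc]
    nlinarith [r_le_one (τ := τ) (θ := θ) hτ.le h0 h1,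
      r_nonneg (τ := τ) (θ := θ) h0 h1]
  -- value at zero
  have hF0 : Ffam τ α ν 0 = (1 / betaFn α ν) *
      ∫ δ in Set.Ioo (0:ℝ) 1, δ ^ (α - 1) * (1 - δ) ^ (ν - 1) := by
    unfold Ffam
    congr 1
    apply setIntegral_congr_fun measurableSet_Ioo
    intro δ hδ
    have h1 : (1:ℝ) - δ ≠ 0 := by
      have := hδ.2; simp only [Set.mem_Ioo] at hδ; intro h; linarith [hδ.2]
    simp only [Real.cos_zero, mul_one, div_self h1, Real.one_rpow, one_mul]
  -- the difference as a single integral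
  have hdiff : ∀ θ : ℝ, Ffam τ α ν 0 - Ffam τ α ν θ = (1 / betaFn α ν) *
      ∫ δ in Set.Ioo (0:ℝ) 1,
        (1 - ((1 - δ) / (1 - δ * Real.cos θ)) ^ τ) * (δ ^ (α - 1) * (1 - δ) ^ (ν - 1)) := by
    intro θ
    rw [hF0]
    unfold Ffam
    rw [← mul_sub]
    congr 1
    rw [← integral_sub hw (hrw θ)]
    apply setIntegral_congr_fun measurableSet_Ioo
    intro δ hδ
    ring
  -- key eventual identity
  have hkey : ∀ᶠ θ in nhdsWithin (0:ℝ) (Set.Ioi 0),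
      (Ffam τ α ν 0 - Ffam τ α ν θ) / θ ^ 2 = (1 / betaFn α ν) *
      ∫ δ in Set.Ioo (0:ℝ) 1,
        (1 - ((1 - δ) / (1 - δ * Real.cos θ)) ^ τ)/θ^2 * (δ ^ (α - 1) * (1 - δ) ^ (ν - 1)) := by
    filter_upwards [self_mem_nhdsWithin] with θ hθ
    rw [hdiff θ, mul_div_assoc, ← integral_div]
    congr 1
    apply integral_congr_ae
    filter_upwards with δ
    ring
  -- dominated convergence
  have hDCT : Tendsto (fun θ : ℝ => ∫ δ in Set.Ioo (0:ℝ) 1,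
        (1 - ((1 - δ) / (1 - δ * Real.cos θ)) ^ τ)/θ^2 * (δ ^ (α - 1) * (1 - δ) ^ (ν - 1)))
      (nhdsWithin 0 (Set.Ioi 0))
      (nhds (∫ δ in Set.Ioo (0:ℝ) 1, τ/2 * (δ ^ α * (1 - δ) ^ (ν - 2)))) := by
    apply tendsto_integral_filter_of_dominated_convergence
      (bound := fun δ : ℝ => (⌈τ⌉₊ : ℝ)/2 * (δ ^ α * (1 - δ) ^ (ν - 2)))
    · filter_upwards with θ
      apply ContinuousOn.aestronglyMeasurable _ measurableSet_Ioo
      exact ((continuousOn_const.sub (cont_r τ θ hτ.le)).div_const _).mul (cont_w α ν)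
    · filter_upwards [self_mem_nhdsWithin] with θ hθ
      filter_upwards [self_mem_ae_restrict measurableSet_Ioo] with δ hδ
      exact bound_lemma hτ hθ hδ.1 hδ.2
    · exact hw2.const_mul _
    · filter_upwards [self_mem_ae_restrict measurableSet_Ioo] with δ hδ
      exact pointwise_tendsto τ α ν hτ hδ.1 hδ.2
  -- positivity of the limit
  have hpos : 0 < ∫ δ in Set.Ioo (0:ℝ) 1, τ/2 * (δ ^ α * (1 - δ) ^ (ν - 2)) := by
    rw [setIntegral_pos_iff_support_of_nonneg_ae]
    · have hsub : Set.Ioo (0:ℝ) 1 ⊆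
          (Function.support fun δ : ℝ => τ/2 * (δ ^ α * (1 - δ) ^ (ν - 2))) ∩ Set.Ioo 0 1 := by
        intro δ hδ
        refine ⟨?_, hδ⟩
        have h0 := hδ.1; have h1 := hδ.2
        have hd : (0:ℝ) < 1 - δ := by linarith
        have : (0:ℝ) < τ/2 * (δ ^ α * (1 - δ) ^ (ν - 2)) := by positivity
        exact Function.mem_support.mpr (ne_of_gt this)
      calc (0:ENNReal) < volume (Set.Ioo (0:ℝ) 1) := by simp [Real.volume_Ioo]
        _ ≤ _ := measure_mono hsub
    · filter_upwards [self_mem_ae_restrict measurableSet_Ioo] with δ hδ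
      have h0 := hδ.1; have h1 := hδ.2
      have hd : (0:ℝ) < 1 - δ := by linarith
      positivity
    · exact hw2.const_mul _
  refine ⟨(1 / betaFn α ν) * ∫ δ in Set.Ioo (0:ℝ) 1, τ/2 * (δ ^ α * (1 - δ) ^ (ν - 2)),
    by positivity, ?_⟩
  refine (hDCT.const_mul (1 / betaFn α ν)).congr' ?_
  exact hkey.mono fun θ h => h.symm
end
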